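/- Let $k$ be a field and $R = k[x,y]$ with $\deg x = 2$, $\deg y = 3$. The monomial ideal $I = (x^{12}, x^{10}y, x^8y^2, x^6y^3, x^5y^4, x^4y^5, x^3y^6, x^2y^7, xy^8, y^9)$ equals its own integral closure; in particular, $R_{\geq 21}$ is not the integral closure of $(R_{\geq 7})^3$. -/

import Mathlib

set_option synthInstance.maxHeartbeats 400000
set_option maxHeartbeats 800000

open MvPolynomial

/-- `x` is integral over the ideal `I`: it satisfies an equation
`x^n + a_1 x^{n-1} + ⋯ + a_n = 0` with `a_i ∈ I^i`. -/
def IsIntegralOverIdeal {S : Type*} [CommRing S] (I : Ideal S) (x : S) : Prop :=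
  ∃ n : ℕ, 0 < n ∧ ∃ a : ℕ → S, (∀ i ∈ Finset.Icc 1 n, a i ∈ I ^ i) ∧
    x ^ n + ∑ i ∈ Finset.Icc 1 n, a i * x ^ (n - i) = 0

namespace Stmt14Aux

variable {k : Type*} [Field k]

/-- Linear weight of an exponent vector. -/
def W (u : Fin 2 → ℕ) (d : Fin 2 →₀ ℕ) : ℕ := u 0 * d 0 + u 1 * d 1

lemma W_add (u : Fin 2 → ℕ) (d e : Fin 2 →₀ ℕ) : W u (d + e) = W u d + W u e := by
  simp only [W, Finsupp.add_apply]; ring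

/-- The ideal of polynomials all of whose monomials have weight at least `m`. -/
def J (u : Fin 2 → ℕ) (m : ℕ) : Ideal (MvPolynomial (Fin 2) k) where
  carrier := {f | ∀ d ∈ f.support, m ≤ W u d}
  zero_mem' := by simp
  add_mem' := by
    classical
    intro f g hf hg d hd
    rcases Finset.mem_union.mp (MvPolynomial.support_add hd) with h | h
    exacts [hf d h, hg d h]
  smul_mem' := by
    classical
    intro c f hf d hd
    rw [smul_eq_mul] at hd
    obtain ⟨a, ha, b, hb, rfl⟩ := Finset.mem_add.mp (MvPolynomial.support_mul c f hd)
    have := hf b hb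
    rw [W_add]; omega

lemma mul_mem_J {u : Fin 2 → ℕ} {m m' : ℕ} {f g : MvPolynomial (Fin 2) k}
    (hf : f ∈ J u m) (hg : g ∈ J u m') : f * g ∈ J u (m + m') := by
  classical
  intro d hd
  obtain ⟨a, ha, b, hb, rfl⟩ := Finset.mem_add.mp (MvPolynomial.support_mul f g hd)
  have h1 := hf a ha
  have h2 := hg b hb
  rw [W_add]; omega

lemma J_antitone {u : Fin 2 → ℕ} {m m' : ℕ} (h : m' ≤ m) :
    (J u m : Ideal (MvPolynomial (Fin 2) k)) ≤ J u m' :=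
  fun _ hf d hd => le_trans h (hf d hd)

lemma J_pow_le (u : Fin 2 → ℕ) (m : ℕ) (i : ℕ) :
    (J u m : Ideal (MvPolynomial (Fin 2) k)) ^ i ≤ J u (i * m) := by
  induction i with
  | zero =>
    intro f _ d _
    simp [W]
  | succ i ih =>
    rw [pow_succ]
    refine le_trans (Ideal.mul_mono_left ih) ?_
    refine le_trans (Ideal.mul_le.2 fun f hf g hg => mul_mem_J hf hg) ?_
    rw [Nat.succ_mul]

/-- Rees-valuation-style map: send `X i` to `C (X i) * t ^ (u i)`. -/
noncomputable def Φ (u : Fin 2 → ℕ) :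
    MvPolynomial (Fin 2) k →+* Polynomial (MvPolynomial (Fin 2) k) :=
  eval₂Hom (Polynomial.C.comp MvPolynomial.C)
    (fun i => Polynomial.C (X i) * Polynomial.X ^ u i)

lemma Φ_monomial (u : Fin 2 → ℕ) (d : Fin 2 →₀ ℕ) (c : k) :
    Φ u (monomial d c) = Polynomial.C (monomial d c) * Polynomial.X ^ W u d := by
  simp only [Φ, eval₂Hom_monomial]
  rw [Finsupp.prod_fintype _ _ (fun i => pow_zero _), Fin.prod_univ_two]
  rw [monomial_eq, Finsupp.prod_fintype _ _ (fun i => pow_zero _), Fin.prod_univ_two]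
  simp only [RingHom.coe_comp, Function.comp_apply, mul_pow, ← Polynomial.C_pow,
    ← pow_mul, map_mul, W]
  ring

lemma coeff_Φ (u : Fin 2 → ℕ) (f : MvPolynomial (Fin 2) k) (j : ℕ) :
    (Φ u f).coeff j =
      ∑ d ∈ f.support, if j = W u d then monomial d (coeff d f) else 0 := by
  classical
  conv_lhs => rw [f.as_sum]
  rw [map_sum, Polynomial.finset_sum_coeff]
  refine Finset.sum_congr rfl fun d _ => ?_
  rw [Φ_monomial, Polynomial.coeff_C_mul, Polynomial.coeff_X_pow]
  split_ifs <;> simp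

lemma mem_J_iff_coeff {u : Fin 2 → ℕ} {m : ℕ} {f : MvPolynomial (Fin 2) k} :
    f ∈ J u m ↔ ∀ j < m, (Φ u f).coeff j = 0 := by
  classical
  constructor
  · intro hf j hj
    rw [coeff_Φ]
    refine Finset.sum_eq_zero fun d hd => ?_
    rw [if_neg]
    have := hf d hd
    omega
  · intro h d hd
    by_contra hlt
    push_neg at hlt
    have h0 := h (W u d) hlt
    rw [coeff_Φ] at h0
    have h1 := congrArg (MvPolynomial.coeff d) h0
    rw [MvPolynomial.coeff_sum, Finset.sum_eq_single d] at h1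
    · rw [if_pos rfl, coeff_monomial, if_pos rfl] at h1
      simp only [coeff_zero] at h1
      exact (MvPolynomial.mem_support_iff.mp hd) h1
    · intro b _ hbd
      split_ifs
      · rw [coeff_monomial, if_neg hbd]
      · exact coeff_zero d
    · intro hds
      exact absurd hd hds

lemma Φ_ne_zero (u : Fin 2 → ℕ) {f : MvPolynomial (Fin 2) k} (hf : f ≠ 0) :
    Φ u f ≠ 0 := by
  intro h
  have hid : (Polynomial.evalRingHom (1 : MvPolynomial (Fin 2) k)).comp (Φ u)
      = RingHom.id _ := by
    apply MvPolynomial.ringHom_ext <;> intro i <;>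
      simp [Φ]
  have h2 := RingHom.congr_fun hid f
  rw [RingHom.comp_apply, h, map_zero] at h2
  exact hf h2.symm

/-- The minimal weight of a monomial of `f`. -/
noncomputable def v (u : Fin 2 → ℕ) (f : MvPolynomial (Fin 2) k) : ℕ :=
  (Φ u f).natTrailingDegree

lemma mem_J_iff {u : Fin 2 → ℕ} {m : ℕ} {f : MvPolynomial (Fin 2) k} :
    f ∈ J u m ↔ f = 0 ∨ m ≤ v u f := by
  rcases eq_or_ne f 0 with rfl | hf
  · simp [Ideal.zero_mem]
  · rw [mem_J_iff_coeff]
    constructor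
    · intro h
      exact Or.inr (Polynomial.le_natTrailingDegree (Φ_ne_zero u hf) h)
    · rintro (rfl | h)
      · exact absurd rfl hf
      · intro j hj
        exact Polynomial.coeff_eq_zero_of_lt_natTrailingDegree (lt_of_lt_of_le hj h)

lemma v_pow (u : Fin 2 → ℕ) {f : MvPolynomial (Fin 2) k} (hf : f ≠ 0) (n : ℕ) :
    v u (f ^ n) = n * v u f := by
  induction n with
  | zero => simp [v]
  | succ n ih =>
    have h1 : Φ u (f ^ (n + 1)) = Φ u (f ^ n) * Φ u f := by rw [← map_mul, pow_succ]
    rw [v, h1, Polynomial.natTrailingDegree_mul (Φ_ne_zero u (pow_ne_zero _ hf))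
      (Φ_ne_zero u hf), ← v, ← v, ih]
    ring

/-- Anything integral over an ideal contained in `J u m` lies in `J u m`. -/
lemma mem_J_of_integral (u : Fin 2 → ℕ) (m : ℕ) {K : Ideal (MvPolynomial (Fin 2) k)}
    (hK : K ≤ J u m) {x : MvPolynomial (Fin 2) k}
    (hx : IsIntegralOverIdeal K x) : x ∈ J u m := by
  rcases eq_or_ne x 0 with rfl | hx0
  · exact (J u m).zero_mem
  by_contra hxm
  rw [mem_J_iff] at hxm
  push_neg at hxm
  obtain ⟨-, hvm⟩ := hxm
  set V := v u x with hV
  obtain ⟨n, hn, a, ha, heq⟩ := hx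
  have hxJ : x ∈ J u V := mem_J_iff.2 (Or.inr le_rfl)
  have hterm : ∀ i ∈ Finset.Icc 1 n, a i * x ^ (n - i) ∈ J u (n * V + 1) := by
    intro i hi
    rw [Finset.mem_Icc] at hi
    have h1 : a i ∈ J u (i * m) :=
      J_pow_le u m i (Ideal.pow_right_mono hK i (ha i (Finset.mem_Icc.2 hi)))
    have h2 : x ^ (n - i) ∈ J u ((n - i) * V) :=
      J_pow_le u V (n - i) (Ideal.pow_mem_pow hxJ (n - i))
    have h3 : a i * x ^ (n - i) ∈ J u (i * m + (n - i) * V) := mul_mem_J h1 h2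
    refine J_antitone ?_ h3
    have h5 : i * (V + 1) ≤ i * m := Nat.mul_le_mul_left i hvm
    have h6 : i * V + (n - i) * V = n * V := by
      rw [← add_mul]
      congr 1
      omega
    nlinarith
  have hsum : (∑ i ∈ Finset.Icc 1 n, a i * x ^ (n - i)) ∈ J u (n * V + 1) :=
    Ideal.sum_mem _ hterm
  have hxn : x ^ n ∈ J u (n * V + 1) := by
    have hx' : x ^ n = -(∑ i ∈ Finset.Icc 1 n, a i * x ^ (n - i)) :=
      eq_neg_of_add_eq_zero_left heq
    rw [hx']
    exact Submodule.neg_mem _ hsum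
  rw [mem_J_iff] at hxn
  rcases hxn with h | h
  · exact pow_ne_zero n hx0 h
  · rw [v_pow u hx0, ← hV] at h
    omega

/-- exponent vector `(a, b)` -/
noncomputable def e (a b : ℕ) : Fin 2 →₀ ℕ := Finsupp.single 0 a + Finsupp.single 1 b

lemma e_apply_zero (a b : ℕ) : e a b 0 = a := by
  simp [e, Finsupp.single_apply]

lemma e_apply_one (a b : ℕ) : e a b 1 = b := by
  simp [e, Finsupp.single_apply]

lemma W_e (u : Fin 2 → ℕ) (a b : ℕ) : W u (e a b) = u 0 * a + u 1 * b := by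
  rw [W, e_apply_zero, e_apply_one]

lemma e_le {a b : ℕ} {d : Fin 2 →₀ ℕ} (h0 : a ≤ d 0) (h1 : b ≤ d 1) : e a b ≤ d := by
  rw [Finsupp.le_def]
  intro i
  fin_cases i
  · show e a b 0 ≤ d 0
    rw [e_apply_zero]; exact h0
  · show e a b 1 ≤ d 1
    rw [e_apply_one]; exact h1

lemma X_pow_mul_X_pow (a b : ℕ) :
    (X 0 ^ a * X 1 ^ b : MvPolynomial (Fin 2) k) = monomial (e a b) 1 := by
  rw [X_pow_eq_monomial, X_pow_eq_monomial, monomial_mul, one_mul, e]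

lemma monomial_dvd_mem {g d : Fin 2 →₀ ℕ} (hgd : g ≤ d) (c : k)
    {K : Ideal (MvPolynomial (Fin 2) k)} (hK : monomial g 1 ∈ K) :
    monomial d c ∈ K := by
  have hh : monomial d c = monomial (d - g) c * monomial g 1 := by
    rw [monomial_mul, mul_one, tsub_add_cancel_of_le hgd]
  rw [hh]
  exact Ideal.mul_mem_left _ _ hK

lemma monomial_mem_J {u : Fin 2 → ℕ} {m : ℕ} {d : Fin 2 →₀ ℕ} (c : k)
    (h : m ≤ W u d) : monomial d c ∈ J u m := by
  classical
  intro d' hd'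
  rw [support_monomial] at hd'
  split_ifs at hd'
  · exact absurd hd' (Finset.notMem_empty d')
  · rw [Finset.mem_singleton.mp hd']
    exact h

lemma weight_eval (u : Fin 2 → ℕ) (d : Fin 2 →₀ ℕ) :
    (Finsupp.weight u) d = u 0 * d 0 + u 1 * d 1 := by
  rw [Finsupp.weight_apply, Finsupp.sum_fintype _ _ (fun i => zero_smul ℕ (u i)),
    Fin.sum_univ_two]
  simp [mul_comm]

end Stmt14Aux

open Stmt14Aux

theorem stmt14 (k : Type*) [Field k]
    (w : Fin 2 → ℕ) (hw : w = ![2, 3])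
    (I : Ideal (MvPolynomial (Fin 2) k))
    (hI : I = Ideal.span {X 0 ^ 12, X 0 ^ 10 * X 1, X 0 ^ 8 * X 1 ^ 2,
      X 0 ^ 6 * X 1 ^ 3, X 0 ^ 5 * X 1 ^ 4, X 0 ^ 4 * X 1 ^ 5, X 0 ^ 3 * X 1 ^ 6,
      X 0 ^ 2 * X 1 ^ 7, X 0 * X 1 ^ 8, X 1 ^ 9})
    (I7 I21 : Ideal (MvPolynomial (Fin 2) k))
    (h7 : I7 = Ideal.span {f | ∃ d : ℕ, 7 ≤ d ∧ IsWeightedHomogeneous w f d})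
    (h21 : I21 = Ideal.span {f | ∃ d : ℕ, 21 ≤ d ∧ IsWeightedHomogeneous w f d}) :
    (∀ x : MvPolynomial (Fin 2) k, IsIntegralOverIdeal I x → x ∈ I) ∧
      ¬ (∀ x : MvPolynomial (Fin 2) k,
        x ∈ I21 ↔ IsIntegralOverIdeal (I7 ^ 3) x) := by
  classical
  subst hw
  set u1 : Fin 2 → ℕ := ![1, 2] with hu1
  set u2 : Fin 2 → ℕ := ![1, 1] with hu2
  have hu10 : u1 0 = 1 := rfl
  have hu11 : u1 1 = 2 := rfl
  have hu20 : u2 0 = 1 := rfl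
  have hu21 : u2 1 = 1 := rfl
  have hgen : ∀ a b : ℕ, (X 0 ^ a * X 1 ^ b : MvPolynomial (Fin 2) k)
      = monomial (e a b) 1 := X_pow_mul_X_pow
  -- the ten generators are in I
  have hmem : ∀ a b : ℕ, (a, b) ∈ ({(12,0), (10,1), (8,2), (6,3), (5,4), (4,5),
      (3,6), (2,7), (1,8), (0,9)} : Set (ℕ × ℕ)) →
      (monomial (e a b) 1 : MvPolynomial (Fin 2) k) ∈ I := by
    intro a b hab
    rw [hI]
    apply Ideal.subset_span
    simp only [Set.mem_insert_iff, Set.mem_singleton_iff, Prod.mk.injEq] at hab ⊢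
    rcases hab with ⟨rfl, rfl⟩|⟨rfl, rfl⟩|⟨rfl, rfl⟩|⟨rfl, rfl⟩|⟨rfl, rfl⟩|⟨rfl, rfl⟩|
      ⟨rfl, rfl⟩|⟨rfl, rfl⟩|⟨rfl, rfl⟩|⟨rfl, rfl⟩ <;>
      simp only [← hgen, pow_zero, pow_one, mul_one, one_mul, true_or, or_true] <;> tauto
  -- I is contained in the two weight ideals
  have hJmem : ∀ (u : Fin 2 → ℕ) (m a b : ℕ), m ≤ u 0 * a + u 1 * b →
      ((X 0 : MvPolynomial (Fin 2) k) ^ a * X 1 ^ b) ∈ J u m := by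
    intro u m a b h
    rw [hgen]
    exact monomial_mem_J 1 (by rw [W_e]; exact h)
  have hIJ1 : I ≤ J u1 12 := by
    rw [hI, Ideal.span_le]
    rintro f (rfl|rfl|rfl|rfl|rfl|rfl|rfl|rfl|rfl|rfl)
    · simpa using hJmem u1 12 12 0 (by norm_num [hu1, hu2])
    · simpa using hJmem u1 12 10 1 (by norm_num [hu1, hu2])
    · exact hJmem u1 12 8 2 (by norm_num [hu1, hu2])
    · exact hJmem u1 12 6 3 (by norm_num [hu1, hu2])
    · exact hJmem u1 12 5 4 (by norm_num [hu1, hu2])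
    · exact hJmem u1 12 4 5 (by norm_num [hu1, hu2])
    · exact hJmem u1 12 3 6 (by norm_num [hu1, hu2])
    · exact hJmem u1 12 2 7 (by norm_num [hu1, hu2])
    · simpa using hJmem u1 12 1 8 (by norm_num [hu1, hu2])
    · simpa using hJmem u1 12 0 9 (by norm_num [hu1, hu2])
  have hIJ2 : I ≤ J u2 9 := by
    rw [hI, Ideal.span_le]
    rintro f (rfl|rfl|rfl|rfl|rfl|rfl|rfl|rfl|rfl|rfl)
    · simpa using hJmem u2 9 12 0 (by norm_num [hu1, hu2])
    · simpa using hJmem u2 9 10 1 (by norm_num [hu1, hu2])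
    · exact hJmem u2 9 8 2 (by norm_num [hu1, hu2])
    · exact hJmem u2 9 6 3 (by norm_num [hu1, hu2])
    · exact hJmem u2 9 5 4 (by norm_num [hu1, hu2])
    · exact hJmem u2 9 4 5 (by norm_num [hu1, hu2])
    · exact hJmem u2 9 3 6 (by norm_num [hu1, hu2])
    · exact hJmem u2 9 2 7 (by norm_num [hu1, hu2])
    · simpa using hJmem u2 9 1 8 (by norm_num [hu1, hu2])
    · simpa using hJmem u2 9 0 9 (by norm_num [hu1, hu2])
  -- conversely: weight conditions imply membership in I
  have hJI : ∀ f : MvPolynomial (Fin 2) k, f ∈ J u1 12 → f ∈ J u2 9 → f ∈ I := by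
    intro f h1 h2
    nth_rewrite 1 [f.as_sum]
    apply Ideal.sum_mem
    intro d hd
    have ha := h1 d hd
    have hb := h2 d hd
    rw [W, hu10, hu11] at ha
    rw [W, hu20, hu21] at hb
    set a := d 0 with hadef
    set b := d 1 with hbdef
    clear_value a b
    rcases lt_or_ge b 9 with h9 | h9
    · interval_cases b <;>
        first
          | exact monomial_dvd_mem (e_le (by omega) (by omega)) _ (hmem 12 0 (by simp))
          | exact monomial_dvd_mem (e_le (by omega) (by omega)) _ (hmem 10 1 (by simp))
          | exact monomial_dvd_mem (e_le (by omega) (by omega)) _ (hmem 8 2 (by simp))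
          | exact monomial_dvd_mem (e_le (by omega) (by omega)) _ (hmem 6 3 (by simp))
          | exact monomial_dvd_mem (e_le (by omega) (by omega)) _ (hmem 5 4 (by simp))
          | exact monomial_dvd_mem (e_le (by omega) (by omega)) _ (hmem 4 5 (by simp))
          | exact monomial_dvd_mem (e_le (by omega) (by omega)) _ (hmem 3 6 (by simp))
          | exact monomial_dvd_mem (e_le (by omega) (by omega)) _ (hmem 2 7 (by simp))
          | exact monomial_dvd_mem (e_le (by omega) (by omega)) _ (hmem 1 8 (by simp))
    · exact monomial_dvd_mem (e_le (by omega) (by omega)) _ (hmem 0 9 (by simp))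
  constructor
  · intro x hx
    exact hJI x (mem_J_of_integral u1 12 hIJ1 hx) (mem_J_of_integral u2 9 hIJ2 hx)
  · -- I7 ≤ J u1 4
    have hI7a : I7 ≤ J u1 4 := by
      rw [h7, Ideal.span_le]
      rintro f ⟨d, hd7, hf⟩ x hx
      have hc := hf (MvPolynomial.mem_support_iff.mp hx)
      rw [weight_eval] at hc
      have h20 : (![2, 3] : Fin 2 → ℕ) 0 = 2 := rfl
      have h31 : (![2, 3] : Fin 2 → ℕ) 1 = 3 := rfl
      rw [h20, h31] at hc
      rw [W, hu10, hu11]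
      omega
    have h73a : I7 ^ 3 ≤ J u1 12 := by
      have h := J_pow_le (k := k) u1 4 3
      norm_num at h
      exact le_trans (Ideal.pow_right_mono hI7a 3) h
    intro hall
    set x0 : MvPolynomial (Fin 2) k := monomial (e 9 1) 1 with hx0
    have hx021 : x0 ∈ I21 := by
      rw [h21]
      apply Ideal.subset_span
      refine ⟨21, le_refl 21, isWeightedHomogeneous_monomial _ _ _ ?_⟩
      rw [weight_eval, e_apply_zero, e_apply_one]
      rfl
    have hint := (hall x0).1 hx021
    have hx0J : x0 ∈ J u1 12 := mem_J_of_integral u1 12 h73a hint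
    have hbad := hx0J (e 9 1) (by
      rw [hx0, support_monomial, if_neg one_ne_zero]
      exact Finset.mem_singleton_self _)
    rw [W_e, hu10, hu11] at hbad
    omega
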